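/- Let q be a primitive word of length 2m (m ≥ 1) and x any word of length m. Then the word x q x is primitive. -/

import Mathlib

variable {A : Type*}

/-- k-fold concatenation of a word with itself. -/
def pw (w : List A) : ℕ → List A
  | 0 => []
  | n + 1 => w ++ pw w n

/-- A nonempty word is primitive if it is not a proper power. -/
def Primitive (w : List A) : Prop :=
  w ≠ [] ∧ ∀ (v : List A) (m : ℕ), w = pw v m → m = 1

lemma pw_length (w : List A) (n : ℕ) : (pw w n).length = n * w.length := by
  induction n with
  | zero => simp [pw]
  | succ k ih => simp [pw, ih]; ring

lemma pw_add (w : List A) (a b : ℕ) : pw w (a + b) = pw w a ++ pw w b := by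
  induction a with
  | zero => simp [pw]
  | succ k ih =>
      have : k + 1 + b = (k + b) + 1 := by omega
      rw [this]
      simp [pw, ih]

lemma pw_pw (w : List A) (a b : ℕ) : pw (pw w a) b = pw w (b * a) := by
  induction b with
  | zero => simp [pw]
  | succ k ih =>
      have h1 : pw (pw w a) (k+1) = pw w a ++ pw (pw w a) k := rfl
      rw [h1, ih, ← pw_add]
      congr 1
      ring

lemma pw_nil (k : ℕ) : pw ([] : List A) k = [] := by
  induction k with
  | zero => rfl
  | succ k ih => simp [pw, ih]

lemma pw_conj (s t : List A) (k : ℕ) :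
    pw (s ++ t) k ++ s = s ++ pw (t ++ s) k := by
  induction k with
  | zero => simp [pw]
  | succ k ih => simp only [pw, List.append_assoc, ih]

lemma pw_rotate (v : List A) (k t : ℕ) :
    (pw v k).rotate t = pw (v.rotate t) k := by
  rcases eq_or_ne v [] with rfl | hv
  · simp [pw_nil]
  have hn : 0 < v.length := List.length_pos_iff.mpr hv
  induction t using Nat.strong_induction_on with
  | _ t ih =>
    by_cases ht : t ≤ v.length
    · cases k with
      | zero => simp [pw]
      | succ k =>
        have hsplit : pw v (k+1) = v.take t ++ (v.drop t ++ pw v k) := by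
          show v ++ pw v k = _
          nth_rewrite 1 [← List.take_append_drop t v]
          rw [List.append_assoc]
        have hlen : t ≤ (pw v (k+1)).length := by
          rw [pw_length]; nlinarith
        rw [List.rotate_eq_drop_append_take hlen, List.rotate_eq_drop_append_take ht]
        rw [hsplit, List.drop_left' (by simp [Nat.min_eq_left ht]),
          List.take_left' (by simp [Nat.min_eq_left ht])]
        have hc := pw_conj (v.take t) (v.drop t) k
        rw [List.take_append_drop] at hc
        calc (v.drop t ++ pw v k) ++ v.take t
            = v.drop t ++ (pw v k ++ v.take t) := by simp [List.append_assoc]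
          _ = v.drop t ++ (v.take t ++ pw (v.drop t ++ v.take t) k) := by rw [hc]
          _ = (v.drop t ++ v.take t) ++ pw (v.drop t ++ v.take t) k := by
              simp [List.append_assoc]
          _ = pw (v.drop t ++ v.take t) (k+1) := by simp [pw]
    · push_neg at ht
      have h1 : t = v.length + (t - v.length) := by omega
      have hvr : v.rotate v.length = v := List.rotate_length v
      have hwr : (pw v k).rotate v.length = pw v k := by
        have := ih v.length (by omega)
        rw [this, hvr]
      calc (pw v k).rotate t
          = ((pw v k).rotate v.length).rotate (t - v.length) := by
            rw [List.rotate_rotate, ← h1]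
        _ = (pw v k).rotate (t - v.length) := by rw [hwr]
        _ = pw (v.rotate (t - v.length)) k := ih _ (by omega)
        _ = pw (v.rotate t) k := by
            rw [show v.rotate (t - v.length) = v.rotate t from by
              conv_rhs => rw [h1, ← List.rotate_rotate, hvr]]

lemma rotate_mul_length (l : List A) (c : ℕ) : l.rotate (c * l.length) = l := by
  induction c with
  | zero => simp
  | succ k ih =>
      have : (k + 1) * l.length = k * l.length + l.length := by ring
      rw [this, ← List.rotate_rotate, ih, List.rotate_length]

lemma rotate_fix_mul {l : List A} {d : ℕ} (h : l.rotate d = l) (a : ℕ) :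
    l.rotate (a * d) = l := by
  induction a with
  | zero => simp
  | succ k ih =>
      have : (k + 1) * d = k * d + d := by ring
      rw [this, ← List.rotate_rotate, ih, h]

lemma exists_mul_mod (d n : ℕ) : ∃ a : ℕ, a * d % n = Nat.gcd d n % n := by
  rcases Nat.eq_zero_or_pos n with rfl | hn
  · exact ⟨1, by simp⟩
  set B := Nat.gcdB d n
  set Aa := Nat.gcdA d n
  have hbez : (Nat.gcd d n : ℤ) = d * Aa + n * B := Nat.gcd_eq_gcd_ab d n
  refine ⟨(Aa % (n : ℤ)).toNat, ?_⟩
  have hnz : (n : ℤ) ≠ 0 := by exact_mod_cast hn.ne'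
  have hnn : 0 ≤ Aa % (n : ℤ) := Int.emod_nonneg _ hnz
  have hcast : ((Aa % (n : ℤ)).toNat : ℤ) = Aa % (n : ℤ) := Int.toNat_of_nonneg hnn
  have key : ((Aa % (n : ℤ)).toNat * d : ℤ) % n = (Nat.gcd d n : ℤ) % n := by
    rw [hcast]
    calc (Aa % (n:ℤ)) * d % n = Aa * d % n := by
          rw [Int.mul_emod, Int.emod_emod_of_dvd _ dvd_rfl, ← Int.mul_emod]
      _ = (d * Aa + n * B) % n := by
          rw [mul_comm, Int.add_mul_emod_self_left]
      _ = (Nat.gcd d n : ℤ) % n := by rw [← hbez]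
  have := key
  rw [show ((Aa % (n : ℤ)).toNat * d : ℤ) = (((Aa % (n : ℤ)).toNat * d : ℕ) : ℤ) by
    push_cast; ring] at this
  have h2 : ((((Aa % (n : ℤ)).toNat * d : ℕ) % n : ℕ) : ℤ) = ((Nat.gcd d n % n : ℕ) : ℤ) := by
    push_cast
    exact this
  exact_mod_cast h2

lemma rotate_gcd {l : List A} {d : ℕ} (h : l.rotate d = l) :
    l.rotate (Nat.gcd d l.length) = l := by
  rcases eq_or_ne l [] with rfl | hl
  · simp
  obtain ⟨a, ha⟩ := exists_mul_mod d l.length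
  calc l.rotate (Nat.gcd d l.length)
      = l.rotate (Nat.gcd d l.length % l.length) := (List.rotate_mod _ _).symm
    _ = l.rotate (a * d % l.length) := by rw [← ha]
    _ = l.rotate (a * d) := List.rotate_mod _ _
    _ = l := rotate_fix_mul h a

lemma pw_of_conj : ∀ (c : ℕ) (s t t' : List A), 0 < t.length → t.length = t'.length →
    t ++ s = s ++ t' → s.length = c * t.length → s = pw t c := by
  intro c
  induction c with
  | zero =>
      intro s t t' _ _ _ hlen
      simp at hlen
      simp [hlen, pw]
  | succ k ih =>
      intro s t t' hg hll h hlen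
      have hgs : t.length ≤ s.length := by rw [hlen]; nlinarith
      have hts : s.take t.length = t := by
        have h1 : (t ++ s).take t.length = t := List.take_left' rfl
        have h2 : (s ++ t').take t.length = s.take t.length :=
          List.take_append_of_le_length hgs
        rw [h] at h1; rw [h2] at h1; exact h1
      set s' := s.drop t.length with hs'
      have hsdecomp : s = t ++ s' := by
        have hx : s = s.take t.length ++ s.drop t.length := (List.take_append_drop _ _).symm
        rw [hts] at hx
        exact hx
      have h2 : t ++ s' = s' ++ t' := by
        have : t ++ (t ++ s') = (t ++ s') ++ t' := by rw [← hsdecomp]; exact h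
        rw [List.append_assoc] at this
        exact List.append_cancel_left this
      have hlen' : s'.length = k * t.length := by
        have := List.length_drop (i := t.length) (l := s)
        rw [← hs'] at this
        rw [this, hlen, Nat.succ_mul]; omega
      have := ih s' t t' hg hll h2 hlen'
      rw [hsdecomp, this]
      simp [pw]

lemma period_pow (l : List A) (d c : ℕ) (hd : 0 < d) (hlen : l.length = c * d)
    (hper : l.drop d = l.take (l.length - d)) : l = pw (l.take d) c := by
  cases c with
  | zero =>
      simp at hlen
      simp [hlen, pw]
  | succ k =>
      have hdl : d ≤ l.length := by rw [hlen]; nlinarith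
      have htl : (l.take d).length = d := by simp [Nat.min_eq_left hdl]
      have ht'l : (l.drop (l.length - d)).length = d := by simp; omega
      have h : l.take d ++ l.drop d = l.drop d ++ l.drop (l.length - d) := by
        rw [List.take_append_drop]
        conv_lhs => rw [← List.take_append_drop (l.length - d) l]
        rw [hper]
      have := pw_of_conj k (l.drop d) (l.take d) (l.drop (l.length - d))
        (by omega) (by rw [htl, ht'l]) h
        (by rw [htl, List.length_drop, hlen, Nat.succ_mul]; omega)
      conv_lhs => rw [← List.take_append_drop d l, this]
      simp [pw]

lemma rotate_fix_pow {l : List A} {g c : ℕ} (h : l.rotate g = l) (hg : 0 < g)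
    (hc : l.length = c * g) : l = pw (l.take g) c := by
  by_cases hgl : g ≤ l.length
  · have hrot : l.drop g ++ l.take g = l := by
      rw [← List.rotate_eq_drop_append_take hgl, h]
    have hper : l.drop g = l.take (l.length - g) := by
      have h2 := congrArg (List.take (l.length - g)) hrot
      rwa [List.take_left' (by simp)] at h2
    exact period_pow l g c hg hc hper
  · push_neg at hgl
    have : c = 0 := by nlinarith [hc, hgl]
    subst this
    simp at hc
    simp [hc, pw]

lemma extract_pw (q x t : List A) (m N : ℕ) (hm : 1 ≤ m) (hxl : x.length = m)
    (hql : q.length = 2 * m) (hg : 0 < t.length) (hgm : t.length ∣ m)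
    (hw : x ++ q ++ x = pw t N) :
    q = pw t (2 * (m / t.length)) ∧ 2 ≤ 2 * (m / t.length) := by
  obtain ⟨c1, hc1⟩ := hgm
  have hc1pos : 1 ≤ c1 := by
    rcases Nat.eq_zero_or_pos c1 with h0 | h
    · subst h0; rw [Nat.mul_zero] at hc1; omega
    · exact h
  have hlenw : (x ++ q ++ x).length = 4 * m := by
    simp only [List.length_append, hxl, hql]; omega
  have hN : N = 4 * c1 := by
    have h2 : (pw t N).length = N * t.length := pw_length t N
    rw [← hw, hlenw] at h2
    refine Nat.eq_of_mul_eq_mul_right hg ?_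
    rw [← h2, hc1]; ring
  have hsplit : pw t N = pw t c1 ++ (pw t (2 * c1) ++ pw t c1) := by
    rw [hN, show 4 * c1 = c1 + (2 * c1 + c1) from by ring, pw_add, pw_add]
  have hw' : x ++ (q ++ x) = pw t c1 ++ (pw t (2 * c1) ++ pw t c1) := by
    rw [← List.append_assoc, hw, hsplit]
  have h1 := List.append_inj hw' (by rw [hxl, pw_length, hc1]; ring)
  have h2 := List.append_inj h1.2 (by rw [hql, pw_length, hc1]; ring)
  have hmg : m / t.length = c1 := by
    rw [hc1, Nat.mul_div_cancel_left _ hg]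
  rw [hmg]
  exact ⟨h2.1, by omega⟩

theorem xqx_primitive (q x : List A) (hq : Primitive q) (m : ℕ) (hm : 1 ≤ m)
    (hql : q.length = 2 * m) (hxl : x.length = m) :
    Primitive (x ++ q ++ x) := by
  have hlenw : (x ++ q ++ x).length = 4 * m := by
    simp only [List.length_append, hxl, hql]; omega
  constructor
  · intro h
    rw [h] at hlenw
    simp at hlenw
    omega
  · intro v k hw
    by_contra hk1
    have hlen : k * v.length = 4 * m := by
      have h2 := congrArg List.length hw
      rw [hlenw, pw_length] at h2
      omega
    have hk0 : k ≠ 0 := by rintro rfl; rw [Nat.zero_mul] at hlen; omega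
    have hn0 : 0 < v.length := by
      rcases Nat.eq_zero_or_pos v.length with h0 | h
      · rw [h0, Nat.mul_zero] at hlen; omega
      · exact h
    have hk2 : 2 ≤ k := by omega
    have hfin : ∃ (t : List A) (N : ℕ), 0 < t.length ∧ t.length ∣ m ∧
        x ++ q ++ x = pw t N := by
      have hk234 : k = 2 ∨ k = 3 ∨ 4 ≤ k := by omega
      rcases hk234 with rfl | rfl | hk4
      · -- k = 2
        have hqsplit : x ++ q ++ x = (x ++ q.take m) ++ (q.drop m ++ x) := by
          calc x ++ q ++ x = x ++ (q.take m ++ q.drop m) ++ x := by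
                rw [List.take_append_drop]
            _ = (x ++ q.take m) ++ (q.drop m ++ x) := by
                simp only [List.append_assoc]
        have hw2 : (x ++ q.take m) ++ (q.drop m ++ x) = v ++ v := by
          rw [← hqsplit, hw]
          show pw v 2 = v ++ v
          simp [pw]
        have h1 := List.append_inj hw2
          (by simp only [List.length_append, List.length_take, hxl, hql]; omega)
        have h3 : q.drop m ++ x = x ++ q.take m := by rw [h1.2, ← h1.1]
        have h4 := List.append_inj h3
          (by simp only [List.length_drop, hql, hxl]; omega)
        refine ⟨x, 4, by rw [hxl]; omega, by rw [hxl], ?_⟩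
        have hq2 : q = x ++ x := by
          conv_lhs => rw [← List.take_append_drop m q]
          rw [← h4.2, h4.1]
        rw [hq2]
        simp [pw, List.append_assoc]
      · -- k = 3
        obtain ⟨r, hr1, hr2⟩ : ∃ r, v.length = 4 * r ∧ m = 3 * r :=
          ⟨v.length / 4, by omega⟩
        have hr0 : 0 < r := by omega
        have hx1 : v.take (3 * r) = x := by
          have e1 : (x ++ (q ++ x)).take m = x := List.take_left' hxl
          rw [← List.append_assoc, hw] at e1
          rw [show pw v 3 = v ++ pw v 2 from rfl,
            List.take_append_of_le_length (by omega), hr2] at e1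
          exact e1
        have hx2 : v.drop r = x := by
          have e1 : (x ++ q ++ x).drop (3 * m) = x :=
            List.drop_left' (by simp only [List.length_append, hxl, hql]; omega)
          rw [hw] at e1
          rw [show pw v 3 = (v ++ v) ++ (v ++ []) from by simp [pw],
            show 3 * m = (v ++ v).length + r from by
              simp only [List.length_append]; omega,
            List.drop_length_add_append] at e1
          simpa using e1
        have hper : v.drop r = v.take (v.length - r) := by
          rw [hx2, hr1, show 4 * r - r = 3 * r from by omega, hx1]
        have hv4 : v = pw (v.take r) 4 := period_pow v r 4 hr0 (by omega) hper
        refine ⟨v.take r, 12, ?_, ?_, ?_⟩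
        · rw [List.length_take]; omega
        · rw [List.length_take, Nat.min_eq_left (by omega)]
          exact ⟨3, by omega⟩
        · rw [hw]
          conv_lhs => rw [hv4]
          rw [pw_pw]
      · -- k ≥ 4
        have hnm : v.length ≤ m := by
          have h4 : 4 * v.length ≤ k * v.length := Nat.mul_le_mul_right _ hk4
          omega
        have hdrop : (x ++ q ++ x).drop (3 * m) = x :=
          List.drop_left' (by simp only [List.length_append, hxl, hql]; omega)
        have htake : (x ++ q ++ x).take (3 * m) = x ++ q :=
          List.take_left' (by simp only [List.length_append, hxl, hql]; omega)
        have hrot : (pw v k).rotate (3 * m) = x ++ (x ++ q) := by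
          rw [← hw, List.rotate_eq_drop_append_take (by rw [hlenw]; omega),
            hdrop, htake]
        have hrot2 : pw (v.rotate (3 * m)) k = x ++ (x ++ q) := by
          rw [← pw_rotate]; exact hrot
        obtain ⟨k', rfl⟩ : ∃ k', k = k' + 2 := ⟨k - 2, by omega⟩
        have hsv : v.rotate (3 * m) = v := by
          have l1 : (pw (v.rotate (3 * m)) (k' + 2)).take v.length
              = v.rotate (3 * m) := by
            rw [show pw (v.rotate (3 * m)) (k' + 2)
                = v.rotate (3 * m) ++ pw (v.rotate (3 * m)) (k' + 1) from rfl]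
            exact List.take_left' (by rw [List.length_rotate])
          have l2 : (pw v (k' + 2)).take v.length = v := by
            rw [show pw v (k' + 2) = v ++ pw v (k' + 1) from rfl]
            exact List.take_left' rfl
          have a1 : (x ++ (x ++ q)).take v.length = x.take v.length :=
            List.take_append_of_le_length (by rw [hxl]; omega)
          have a2 : (x ++ q ++ x).take v.length = (x ++ q).take v.length :=
            List.take_append_of_le_length
              (by simp only [List.length_append, hxl, hql]; omega)
          have a3 : (x ++ q).take v.length = x.take v.length :=
            List.take_append_of_le_length (by rw [hxl]; omega)
          rw [← l1, hrot2, a1, ← a3, ← a2, hw, l2]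
        have hmv : v.rotate m = v := by
          have e1 : v.rotate (3 * m + m) = v.rotate m := by
            rw [← List.rotate_rotate, hsv]
          have e2 : v.rotate (4 * m) = v := by
            rw [show 4 * m = (k' + 2) * v.length from hlen.symm, rotate_mul_length]
          rw [show 3 * m + m = 4 * m from by omega, e2] at e1
          exact e1.symm
        have hgm : Nat.gcd m v.length ∣ m := Nat.gcd_dvd_left m v.length
        have hgn : Nat.gcd m v.length ∣ v.length := Nat.gcd_dvd_right m v.length
        have hgpos : 0 < Nat.gcd m v.length := Nat.gcd_pos_of_pos_left _ hm
        have hrotg : v.rotate (Nat.gcd m v.length) = v := rotate_gcd hmv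
        have hvp : v = pw (v.take (Nat.gcd m v.length))
            (v.length / Nat.gcd m v.length) :=
          rotate_fix_pow hrotg hgpos (Nat.div_mul_cancel hgn).symm
        have htl : (v.take (Nat.gcd m v.length)).length = Nat.gcd m v.length := by
          rw [List.length_take, Nat.min_eq_left (Nat.le_of_dvd hn0 hgn)]
        refine ⟨v.take (Nat.gcd m v.length),
          (k' + 2) * (v.length / Nat.gcd m v.length), ?_, ?_, ?_⟩
        · rw [htl]; exact hgpos
        · rw [htl]; exact hgm
        · rw [hw]
          conv_lhs => rw [hvp]
          rw [pw_pw]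
    obtain ⟨t, N, htpos, htm, htw⟩ := hfin
    obtain ⟨hqe, hc2⟩ := extract_pw q x t m N hm hxl hql htpos htm htw
    have hone := hq.2 t (2 * (m / t.length)) hqe
    rw [hone] at hc2
    exact absurd hc2 (by norm_num)
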